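/- For n ≥ 1, fp∫₀¹ x^{-n}/(1+x) dx = (−1)^n ( log 2 + Σ_{l=1}^{n−1} (−1)^l / l ). -/

import Mathlib

open Real Filter Set intervalIntegral

/-- For `n ≥ 1`, `fp∫₀¹ x^{-n}/(1+x) dx = (−1)^n (log 2 + Σ_{l=1}^{n−1} (−1)^l / l)`.
Here `f(x) = 1/(1+x)` has `f^{(k)}(0) = (−1)^k k!`, and the finite part is
`lim_{ε→0⁺}( ∫_ε^1 x^{-n} f(x) dx − Σ_{k=0}^{n-2} ε^{k+1−n} f^{(k)}(0)/(k!(n−1−k))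
+ (log ε) f^{(n−1)}(0)/(n−1)! )`. -/
theorem fp_integral_inv_one_add (n : ℕ) (hn : 1 ≤ n) :
    Filter.Tendsto
      (fun ε : ℝ =>
        (∫ x in ε..1, x ^ (-(n : ℤ)) / (1 + x))
        - ∑ k ∈ Finset.range (n - 1),
            ε ^ ((k : ℤ) + 1 - n) * ((-1) ^ k * (k.factorial : ℝ))
              / (k.factorial * ((n : ℝ) - 1 - k))
        + Real.log ε * ((-1) ^ (n - 1) * ((n - 1).factorial : ℝ)) / (n - 1).factorial)
      (nhdsWithin 0 (Set.Ioi 0))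
      (nhds ((-1) ^ n * (Real.log 2 + ∑ l ∈ Finset.Icc 1 (n - 1), (-1) ^ l / (l : ℝ)))) := by
  obtain ⟨m, rfl⟩ : ∃ m, n = m + 1 := ⟨n - 1, (Nat.succ_pred_eq_of_pos hn).symm⟩
  simp only [Nat.add_sub_cancel]
  set S : ℝ := ∑ k ∈ Finset.range m, (-1 : ℝ) ^ k / ((k : ℝ) - m) with hS_def
  -- reindexing identity
  have hS : S = (-1 : ℝ) ^ (m + 1) * ∑ l ∈ Finset.Icc 1 m, (-1) ^ l / (l : ℝ) := by
    rw [hS_def, Finset.mul_sum]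
    refine Finset.sum_nbij' (fun k => m - k) (fun l => m - l) ?_ ?_ ?_ ?_ ?_
    · intro k hk; simp only [Finset.mem_range] at hk
      simp only [Finset.mem_Icc]; omega
    · intro l hl; simp only [Finset.mem_Icc] at hl
      simp only [Finset.mem_range]; omega
    · intro k hk; simp only [Finset.mem_range] at hk; show m - (m - k) = k; omega
    · intro l hl; simp only [Finset.mem_Icc] at hl; show m - (m - l) = l; omega
    · intro k hk; simp only [Finset.mem_range] at hk
      show (-1:ℝ) ^ k / ((k:ℝ) - m) = (-1) ^ (m+1) * ((-1) ^ (m - k) / ((m - k : ℕ) : ℝ))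
      obtain ⟨j, hj, hj1⟩ : ∃ j, m = k + j ∧ 1 ≤ j := ⟨m - k, by omega, by omega⟩
      subst hj
      have h1 : k + j - k = j := by omega
      rw [h1]
      have hjne : (j : ℝ) ≠ 0 := Nat.cast_ne_zero.2 (by omega)
      have hcne : (k : ℝ) - ((k + j : ℕ) : ℝ) ≠ 0 := by
        push_cast; intro h; apply hjne; linarith
      have hpow : ((-1 : ℝ)) ^ (k + j + 1) * (-1) ^ j = -(-1 : ℝ) ^ k := by
        have h2 : ((-1 : ℝ)) ^ (j + j) = 1 := Even.neg_one_pow ⟨j, rfl⟩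
        calc ((-1 : ℝ)) ^ (k + j + 1) * (-1) ^ j
            = (-1) ^ k * ((-1) ^ (j + j) * (-1)) := by ring
          _ = -(-1 : ℝ) ^ k := by rw [h2]; ring
      rw [← mul_div_assoc, hpow]
      rw [div_eq_div_iff hcne hjne]
      push_cast
      ring
  -- the limiting function
  have hg : Tendsto (fun ε : ℝ => S + (-1 : ℝ) ^ (m + 1) * (Real.log 2 - Real.log (1 + ε)))
      (nhdsWithin 0 (Ioi 0))
      (nhds ((-1) ^ (m + 1) * (Real.log 2 + ∑ l ∈ Finset.Icc 1 m, (-1) ^ l / (l : ℝ)))) := by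
    have hc : ContinuousAt (fun ε : ℝ => S + (-1 : ℝ) ^ (m + 1) * (Real.log 2 - Real.log (1 + ε))) 0 := by
      have hlog : ContinuousAt (fun ε : ℝ => Real.log (1 + ε)) 0 :=
        (Real.continuousAt_log (by norm_num)).comp (by fun_prop)
      fun_prop
    have := hc.tendsto.mono_left (nhdsWithin_le_nhds (s := Ioi (0:ℝ)))
    convert this using 2
    rw [hS]
    simp [Real.log_one]
    ring
  refine Tendsto.congr' ?_ hg
  have hIoo : Ioo (0 : ℝ) 1 ∈ nhdsWithin (0 : ℝ) (Ioi 0) :=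
    Ioo_mem_nhdsGT_of_mem ⟨le_refl 0, by norm_num⟩
  filter_upwards [hIoo] with ε hε
  obtain ⟨hε0, hε1⟩ := hε
  have h0uIcc : (0 : ℝ) ∉ uIcc ε 1 := notMem_uIcc_of_lt hε0 one_pos
  have hx0 : ∀ x ∈ uIcc ε 1, 0 < x := by
    rw [uIcc_of_le hε1.le]
    intro x hx; exact lt_of_lt_of_le hε0 hx.1
  -- decomposition of the integrand
  have hdecomp : EqOn (fun x : ℝ => x ^ (-((m + 1 : ℕ) : ℤ)) / (1 + x))
      (fun x : ℝ => (∑ k ∈ Finset.range m, (-1 : ℝ) ^ k * x ^ ((k : ℤ) - (m + 1)))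
        + ((-1 : ℝ) ^ m * x⁻¹ + (-1 : ℝ) ^ (m + 1) * (1 + x)⁻¹)) (uIcc ε 1) := by
    intro x hx
    have hx0' : 0 < x := hx0 x hx
    have hx1 : (1 : ℝ) + x ≠ 0 := by positivity
    have hne : (-x : ℝ) ≠ 1 := by nlinarith
    have hsum : ∑ k ∈ Finset.range (m + 1), (-1 : ℝ) ^ k * x ^ ((k : ℤ) - (m + 1))
        = (x ^ (-((m + 1 : ℕ) : ℤ)) - (-1 : ℝ) ^ (m + 1)) / (1 + x) := by
      have h1 : ∀ k ∈ Finset.range (m + 1),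
          (-1 : ℝ) ^ k * x ^ ((k : ℤ) - (m + 1)) = x ^ (-((m + 1 : ℕ) : ℤ)) * (-x) ^ k := by
        intro k _
        have : ((k : ℤ) - (m + 1)) = (k : ℤ) + (-((m + 1 : ℕ) : ℤ)) := by push_cast; ring
        rw [this, zpow_add₀ hx0'.ne', zpow_natCast, neg_pow]
        ring
      rw [Finset.sum_congr rfl h1, ← Finset.mul_sum, geom_sum_eq hne (m + 1)]
      have hzpow : x ^ (-((m + 1 : ℕ) : ℤ)) * x ^ (m + 1) = 1 := by
        rw [zpow_neg, zpow_natCast]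
        field_simp
      rw [neg_pow]
      have hstep : (-x - 1 : ℝ) = -(1 + x) := by ring
      rw [hstep, div_neg]
      linear_combination (-((-1 : ℝ) ^ (m + 1)) / (1 + x)) * hzpow
    have hsum' := hsum
    rw [Finset.sum_range_succ] at hsum'
    have hlast : x ^ ((m : ℤ) - (m + 1)) = x⁻¹ := by
      have : ((m : ℤ) - (m + 1)) = -1 := by ring
      rw [this, zpow_neg_one]
    rw [hlast] at hsum'
    linear_combination (-1 : ℝ) * hsum'
  -- integrability pieces
  have hintA : ∀ k ∈ Finset.range m, IntervalIntegrable
      (fun x : ℝ => (-1 : ℝ) ^ k * x ^ ((k : ℤ) - (m + 1))) MeasureTheory.volume ε 1 := by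
    intro k _
    exact (intervalIntegrable_zpow (Or.inr h0uIcc)).const_mul _
  have hintB : IntervalIntegrable (fun x : ℝ => (-1 : ℝ) ^ m * x⁻¹) MeasureTheory.volume ε 1 := by
    have : IntervalIntegrable (fun x : ℝ => x ^ (-1 : ℤ)) MeasureTheory.volume ε 1 :=
      intervalIntegrable_zpow (Or.inr h0uIcc)
    simpa [zpow_neg_one] using this.const_mul ((-1 : ℝ) ^ m)
  have hintC : IntervalIntegrable (fun x : ℝ => (-1 : ℝ) ^ (m + 1) * (1 + x)⁻¹)
      MeasureTheory.volume ε 1 := by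
    apply ContinuousOn.intervalIntegrable
    apply ContinuousOn.mul continuousOn_const
    apply ContinuousOn.inv₀ (by fun_prop)
    intro x hx
    have := hx0 x hx
    positivity
  -- compute the integral
  have hI : (∫ x in ε..1, x ^ (-((m + 1 : ℕ) : ℤ)) / (1 + x))
      = (∑ k ∈ Finset.range m,
          (-1 : ℝ) ^ k * ((1 - ε ^ ((k : ℤ) - (m + 1) + 1)) / (((k : ℤ) - (m + 1) + 1 : ℤ) : ℝ)))
        + ((-1 : ℝ) ^ m * (-Real.log ε)
          + (-1 : ℝ) ^ (m + 1) * (Real.log 2 - Real.log (1 + ε))) := by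
    have hA : IntervalIntegrable (fun x : ℝ => ∑ k ∈ Finset.range m,
        (-1 : ℝ) ^ k * x ^ ((k : ℤ) - (m + 1))) MeasureTheory.volume ε 1 := by
      have heq : (∑ i ∈ Finset.range m, fun x : ℝ => (-1 : ℝ) ^ i * x ^ ((i : ℤ) - (m + 1)))
          = fun x : ℝ => ∑ k ∈ Finset.range m, (-1 : ℝ) ^ k * x ^ ((k : ℤ) - (m + 1)) := by
        funext x; simp
      exact heq ▸ IntervalIntegrable.sum (Finset.range m) hintA
    rw [integral_congr hdecomp]
    rw [integral_add hA (hintB.add hintC)]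
    rw [integral_add hintB hintC]
    rw [integral_finset_sum hintA]
    congr 1
    · apply Finset.sum_congr rfl
      intro k hk
      simp only [Finset.mem_range] at hk
      rw [integral_const_mul, integral_zpow (Or.inr ⟨by omega, h0uIcc⟩), one_zpow]
      push_cast
      ring
    · congr 1
      · rw [integral_const_mul, integral_inv h0uIcc]
        rw [Real.log_div one_ne_zero hε0.ne', Real.log_one]
        ring
      · rw [integral_const_mul]
        have h2 : (∫ x in ε..1, (1 + x)⁻¹) = ∫ x in (1 + ε)..(1 + 1), x⁻¹ :=
          integral_comp_add_left (fun x : ℝ => x⁻¹) 1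
        rw [h2, integral_inv (notMem_uIcc_of_lt (by linarith) (by norm_num))]
        rw [Real.log_div (by norm_num) (by positivity)]
        norm_num
  rw [hI]
  -- combine the sums
  have hfact : ∀ k : ℕ, (k.factorial : ℝ) ≠ 0 := fun k => Nat.cast_ne_zero.2 k.factorial_ne_zero
  have hsums : (∑ k ∈ Finset.range m,
        (-1 : ℝ) ^ k * ((1 - ε ^ ((k : ℤ) - (m + 1) + 1)) / (((k : ℤ) - (m + 1) + 1 : ℤ) : ℝ)))
      - (∑ k ∈ Finset.range m,
          ε ^ ((k : ℤ) + 1 - ((m + 1 : ℕ) : ℤ)) * ((-1 : ℝ) ^ k * (k.factorial : ℝ))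
            / (k.factorial * (((m + 1 : ℕ) : ℝ) - 1 - k))) = S := by
    rw [hS_def, ← Finset.sum_sub_distrib]
    apply Finset.sum_congr rfl
    intro k hk
    simp only [Finset.mem_range] at hk
    have hexp : (k : ℤ) - (m + 1) + 1 = (k : ℤ) + 1 - ((m + 1 : ℕ) : ℤ) := by push_cast; ring
    rw [hexp]
    have hc1 : (((k : ℤ) + 1 - ((m + 1 : ℕ) : ℤ) : ℤ) : ℝ) = (k : ℝ) - m := by push_cast; ring
    have hc2 : ((m + 1 : ℕ) : ℝ) - 1 - k = -((k : ℝ) - m) := by push_cast; ring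
    rw [hc1, hc2]
    have hklt : (k : ℝ) < m := by exact_mod_cast hk
    have hcne : (k : ℝ) - m ≠ 0 := by intro h; nlinarith
    have hcne' : (m : ℝ) - k ≠ 0 := by intro h; nlinarith
    field_simp [hfact k, hcne, hcne']
    ring
  have hlogz : (-1 : ℝ) ^ m * (-Real.log ε)
      + Real.log ε * ((-1 : ℝ) ^ m * (m.factorial : ℝ)) / m.factorial = 0 := by
    field_simp [hfact m]
    ring
  push_cast at hsums ⊢
  linarith [hsums, hlogz]
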